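/- In any Nash equilibrium (s, ξ) of the coordination mechanism with unit activation costs (c(0)=0, c(l)=1 for l ≥ 1), every job j either has ξ_j = 0 or every slot in its window other than s_j is unoccupied. -/

import Mathlib

/-- Number of jobs declaring slot `t`. -/
def load {n : ℕ} (s : Fin n → ℤ) (t : ℤ) : ℕ :=
  (Finset.univ.filter fun j => s j = t).card

/-- Total declared payment on slot `t`. -/
def pay {n : ℕ} (s : Fin n → ℤ) (ξ : Fin n → ℝ) (t : ℤ) : ℝ :=
  ∑ j ∈ Finset.univ.filter (fun j => s j = t), ξ j

/-- Unit activation cost: `c 0 = 0` and `c l = 1` for `l ≥ 1`. -/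
def unitCost (l : ℕ) : ℝ := if l = 0 then 0 else 1

theorem ne_zero_payment_or_window_empty {n : ℕ}
    (r e : Fin n → ℤ) (s : Fin n → ℤ) (ξ : Fin n → ℝ)
    (hwin : ∀ j, s j ∈ Finset.Icc (r j) (e j))
    (hξ : ∀ j, 0 ≤ ξ j)
    (hopen : ∀ j, unitCost (load s (s j)) ≤ pay s ξ (s j))
    (hdev : ∀ j, ∀ t ∈ Finset.Icc (r j) (e j), t ≠ s j →
      ξ j ≤ max 0 (unitCost (load s t + 1) - pay s ξ t))
    (hnec : ∀ j, ξ j ≤ max 0 (unitCost (load s (s j)) - (pay s ξ (s j) - ξ j))) :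
    ∀ j, ξ j = 0 ∨ ∀ t ∈ Finset.Icc (r j) (e j), t ≠ s j → load s t = 0 := by
  intro j
  by_cases h0 : ξ j = 0
  · exact Or.inl h0
  · right
    intro t ht hne
    by_contra hL
    -- t is occupied: get a job k with s k = t
    have hpos : 0 < (Finset.univ.filter fun i => s i = t).card := by
      simpa [load] using Nat.pos_of_ne_zero hL
    obtain ⟨k, hk⟩ := Finset.card_pos.mp hpos
    have hsk : s k = t := (Finset.mem_filter.mp hk).2
    -- slot t is fully paid: pay ≥ 1
    have hopenk := hopen k
    rw [hsk] at hopenk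
    have hload : load s t ≠ 0 := hL
    have hpay : (1 : ℝ) ≤ pay s ξ t := by
      simpa [unitCost, hload] using hopenk
    -- deviation bound forces ξ j ≤ 0
    have hd := hdev j t ht hne
    have : unitCost (load s t + 1) - pay s ξ t ≤ 0 := by
      have hne' : load s t + 1 ≠ 0 := Nat.succ_ne_zero _
      simp only [unitCost, hne', if_false]
      linarith
    have : ξ j ≤ 0 := by
      rw [max_eq_left this] at hd; exact hd
    exact h0 (le_antisymm this (hξ j))
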